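/- Let q be a nonzero complex number that is not a root of unity, and let Ω be a finite multiset of nonzero complex numbers. Then there exists a multiset {S(ℓ_i,a_i)}_{i=1}^n of q-strings in general position (pairwise non-adjacent) such that Ω = ⋃_{i=1}^n S(ℓ_i,a_i) as multisets, and this multiset of q-strings is uniquely determined by Ω. -/

import Mathlib

/-- `q` is not a root of unity. -/
def NotRootOfUnity (q : ℂ) : Prop := ∀ n : ℕ, n ≠ 0 → q ^ n ≠ 1

/-- The `q`-string `S(ℓ,a)` as a finite set. -/
noncomputable def qString (q a : ℂ) (ℓ : ℕ) : Finset ℂ :=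
  (Finset.range ℓ).image (fun i : ℕ => a * q ^ (2 * (i : ℤ) - (ℓ : ℤ) + 1))

/-- The `q`-string `S(ℓ,a)` as a multiset (here represented by a pair `p = (ℓ,a)`). -/
noncomputable def qStringM (q : ℂ) (p : ℕ × ℂ) : Multiset ℂ :=
  (Multiset.range p.1).map (fun i : ℕ => p.2 * q ^ (2 * (i : ℤ) - (p.1 : ℤ) + 1))

/-- Two `q`-strings are adjacent if their union is a strictly longer `q`-string. -/
def Adjacent (q : ℂ) (ℓ : ℕ) (a : ℂ) (ℓ' : ℕ) (a' : ℂ) : Prop :=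
  ∃ (ℓ'' : ℕ) (a'' : ℂ), a'' ≠ 0 ∧ ℓ'' > max ℓ ℓ' ∧
    qString q a ℓ ∪ qString q a' ℓ' = qString q a'' ℓ''

/-- Two `q`-strings (as pairs `(ℓ,a)`) are in general position if they are not adjacent. -/
def GenPos (q : ℂ) (p p' : ℕ × ℂ) : Prop := ¬ Adjacent q p.1 p.2 p'.1 p'.2

namespace QSD

variable {q : ℂ}

lemma zpow_eq_one (hq : q ≠ 0) (hqru : NotRootOfUnity q) {k : ℤ} (h : q ^ k = 1) : k = 0 := by
  rcases lt_trichotomy k 0 with hk | hk | hk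
  · exfalso
    apply hqru (-k).toNat (by omega)
    have h2 : q ^ (((-k).toNat : ℤ)) = 1 := by
      rw [Int.toNat_of_nonneg (by omega), zpow_neg, h, inv_one]
    rwa [zpow_natCast] at h2
  · exact hk
  · exfalso
    apply hqru k.toNat (by omega)
    have h2 : q ^ ((k.toNat : ℤ)) = 1 := by
      rw [Int.toNat_of_nonneg (by omega)]; exact h
    rwa [zpow_natCast] at h2

lemma zpow_inj (hq : q ≠ 0) (hqru : NotRootOfUnity q) {m n : ℤ} (h : q ^ m = q ^ n) : m = n := by
  have h1 : q ^ (m - n) = 1 := by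
    rw [zpow_sub₀ hq, h, div_self (zpow_ne_zero _ hq)]
  have := zpow_eq_one hq hqru h1
  omega

lemma epow_add (hq : q ≠ 0) (b : ℂ) (s t : ℤ) :
    (b * q ^ (2*s)) * q ^ (2*t) = b * q ^ (2*(s+t)) := by
  rw [mul_assoc, ← zpow_add₀ hq, ← mul_add]

lemma bot_shift (hq : q ≠ 0) {x y : ℂ} {t : ℤ} (h : x = y * q ^ (2*t)) :
    y = x * q ^ (2*(-t)) := by
  rw [h, mul_assoc, ← zpow_add₀ hq]
  have ht : 2*t + 2*(-t) = (0:ℤ) := by ring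
  rw [ht, zpow_zero, mul_one]

lemma epow_inj (hq : q ≠ 0) (hqru : NotRootOfUnity q) {b : ℂ} (hb : b ≠ 0) {s t : ℤ}
    (h : b * q ^ (2*s) = b * q ^ (2*t)) : s = t := by
  have := zpow_inj hq hqru (mul_left_cancel₀ hb h)
  omega

lemma mem_qString_int (hq : q ≠ 0) {a : ℂ} {ℓ : ℕ} {x : ℂ} :
    x ∈ qString q a ℓ ↔ ∃ k : ℤ, 0 ≤ k ∧ k < (ℓ : ℤ) ∧ x = (a * q ^ (1 - (ℓ:ℤ))) * q ^ (2*k) := by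
  have key : ∀ i : ℕ, a * q ^ (2 * (i:ℤ) - (ℓ:ℤ) + 1) = (a * q ^ (1 - (ℓ:ℤ))) * q ^ (2*(i:ℤ)) := by
    intro i
    rw [mul_assoc, ← zpow_add₀ hq]
    congr 1
    ring
  constructor
  · intro hx
    simp only [qString, Finset.mem_image, Finset.mem_range] at hx
    obtain ⟨i, hi, rfl⟩ := hx
    exact ⟨(i:ℤ), by omega, by exact_mod_cast hi, key i⟩
  · rintro ⟨k, hk0, hkl, rfl⟩
    simp only [qString, Finset.mem_image, Finset.mem_range]
    refine ⟨k.toNat, by omega, ?_⟩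
    rw [key k.toNat, Int.toNat_of_nonneg hk0]

lemma mem_qStringM_iff {p : ℕ × ℂ} {x : ℂ} : x ∈ qStringM q p ↔ x ∈ qString q p.2 p.1 := by
  simp [qStringM, qString, Multiset.mem_map, Multiset.mem_range, Finset.mem_image,
    Finset.mem_range]

lemma mem_qStringM_int (hq : q ≠ 0) {p : ℕ × ℂ} {x : ℂ} :
    x ∈ qStringM q p ↔
      ∃ k : ℤ, 0 ≤ k ∧ k < (p.1 : ℤ) ∧ x = (p.2 * q ^ (1 - (p.1:ℤ))) * q ^ (2*k) :=
  mem_qStringM_iff.trans (mem_qString_int hq)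

lemma nodup_qStringM (hq : q ≠ 0) (hqru : NotRootOfUnity q) {p : ℕ × ℂ} (ha : p.2 ≠ 0) :
    (qStringM q p).Nodup := by
  refine Multiset.Nodup.map ?_ (Multiset.nodup_range _)
  intro i j hij
  simp only at hij
  have := zpow_inj hq hqru (mul_left_cancel₀ ha hij)
  omega

lemma card_qStringM (p : ℕ × ℂ) : Multiset.card (qStringM q p) = p.1 := by
  simp [qStringM]

lemma qStringM_one (x : ℂ) : qStringM q (1, x) = {x} := by
  have : (2 * ((0:ℕ) : ℤ) - ((1:ℕ) : ℤ) + 1) = 0 := by norm_num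
  simp [qStringM, Multiset.range_succ, this]

lemma mem_sum {L : Multiset (ℕ × ℂ)} {x : ℂ} (hx : x ∈ (L.map (qStringM q)).sum) :
    ∃ p ∈ L, x ∈ qStringM q p := by
  induction L using Multiset.induction with
  | empty => simp at hx
  | cons p L ih =>
    rw [Multiset.map_cons, Multiset.sum_cons, Multiset.mem_add] at hx
    rcases hx with h | h
    · exact ⟨p, Multiset.mem_cons_self _ _, h⟩
    · obtain ⟨p', hp', hx⟩ := ih h
      exact ⟨p', Multiset.mem_cons_of_mem hp', hx⟩

lemma le_sum {L : Multiset (ℕ × ℂ)} {p : ℕ × ℂ} (hp : p ∈ L) :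
    qStringM q p ≤ (L.map (qStringM q)).sum := by
  conv_rhs => rw [← Multiset.cons_erase hp]
  rw [Multiset.map_cons, Multiset.sum_cons]
  exact Multiset.le_add_right _ _

lemma adjacent_symm {ℓ ℓ' : ℕ} {a a' : ℂ} (h : Adjacent q ℓ a ℓ' a') : Adjacent q ℓ' a' ℓ a := by
  obtain ⟨L, b, hb, hL, hu⟩ := h
  exact ⟨L, b, hb, by rwa [max_comm], by rwa [Finset.union_comm]⟩

lemma genpos_symm : Symmetric (GenPos q) := fun _ _ h hadj => h (adjacent_symm hadj)

lemma pairwise_zero {α : Type*} {r : α → α → Prop} : (0 : Multiset α).Pairwise r :=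
  ⟨[], rfl, List.Pairwise.nil⟩

lemma pairwise_cons {α : Type*} {r : α → α → Prop} {x : α} {s : Multiset α}
    (h1 : ∀ y ∈ s, r x y) (h2 : s.Pairwise r) : (x ::ₘ s).Pairwise r := by
  obtain ⟨l, rfl, hl⟩ := h2
  exact ⟨x :: l, by rw [Multiset.cons_coe],
    List.Pairwise.cons (fun y hy => h1 y (by exact_mod_cast hy)) hl⟩

lemma pairwise_mono {α : Type*} {r : α → α → Prop} (hr : Symmetric r) {s t : Multiset α}
    (hst : s ≤ t) (h : t.Pairwise r) : s.Pairwise r := by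
  obtain ⟨l, rfl, hl⟩ := h
  rw [← Multiset.coe_toList s, Multiset.coe_le] at hst
  obtain ⟨l'', hperm, hsub⟩ := hst
  exact ⟨s.toList, (Multiset.coe_toList s).symm, (hperm.pairwise_iff (fun h => hr h)).mp (hl.sublist hsub)⟩

lemma pairwise_forall {α : Type*} {r : α → α → Prop} (hr : Symmetric r) {s : Multiset α}
    (h : s.Pairwise r) {x y : α} (hx : x ∈ s) (hy : y ∈ s) (hxy : x ≠ y) : r x y := by
  obtain ⟨l, rfl, hl⟩ := h
  haveI : Std.Symm r := ⟨fun _ _ h => hr h⟩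
  exact List.Pairwise.forall hl (by exact_mod_cast hx) (by exact_mod_cast hy) hxy

lemma adjacent_mk (hq : q ≠ 0) {ℓ ℓ' : ℕ} {a a' : ℂ}
    (ha : a ≠ 0) (hℓ : 1 ≤ ℓ) {d : ℤ}
    (hbot : a' * q ^ (1 - (ℓ':ℤ)) = a * q ^ (1 - (ℓ:ℤ)) * q ^ (2*d))
    (h1 : d ≤ (ℓ:ℤ)) (h2 : 0 ≤ d + ℓ')
    (h3 : (max (ℓ:ℤ) (ℓ':ℤ)) < max (ℓ:ℤ) (d + ℓ') - min 0 d) :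
    Adjacent q ℓ a ℓ' a' := by
  set b := a * q ^ (1 - (ℓ:ℤ)) with hb
  have hbne : b ≠ 0 := mul_ne_zero ha (zpow_ne_zero _ hq)
  set m : ℤ := min 0 d with hm
  set M : ℤ := max (ℓ:ℤ) (d + ℓ') with hM
  have hmle : m ≤ 0 := min_le_left _ _
  have hMge : (ℓ:ℤ) ≤ M := le_max_left _ _
  set L : ℕ := (M - m).toNat with hL
  have hLcast : (L : ℤ) = M - m := Int.toNat_of_nonneg (by omega)
  have hmax : (max ℓ ℓ' : ℤ) < L := by
    rw [hLcast]
    have : ((max ℓ ℓ' : ℕ) : ℤ) = max (ℓ:ℤ) (ℓ':ℤ) := by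
      simp [Nat.cast_max]
    omega
  refine ⟨L, (b * q ^ (2*m)) * q ^ ((L:ℤ) - 1), ?_, by exact_mod_cast hmax, ?_⟩
  · exact mul_ne_zero (mul_ne_zero hbne (zpow_ne_zero _ hq)) (zpow_ne_zero _ hq)
  · have hbotL : ((b * q ^ (2*m)) * q ^ ((L:ℤ) - 1)) * q ^ (1 - (L:ℤ)) = b * q ^ (2*m) := by
      rw [mul_assoc, ← zpow_add₀ hq]
      have : (L:ℤ) - 1 + (1 - (L:ℤ)) = 0 := by ring
      rw [this, zpow_zero, mul_one]
    ext x
    rw [Finset.mem_union, mem_qString_int hq, mem_qString_int hq, mem_qString_int hq,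
      hbot, hbotL, ← hb]
    constructor
    · rintro (⟨k, hk0, hkl, rfl⟩ | ⟨k, hk0, hkl, rfl⟩)
      · refine ⟨k - m, by omega, by omega, ?_⟩
        rw [epow_add hq]
        congr 2
        ring
      · refine ⟨d + k - m, by omega, by omega, ?_⟩
        rw [epow_add hq, epow_add hq]
        congr 2
        ring
    · rintro ⟨k, hk0, hkl, rfl⟩
      have hj : m ≤ m + k ∧ m + k < M := by omega
      rcases (show (0 ≤ m + k ∧ m + k < (ℓ:ℤ)) ∨ (d ≤ m + k ∧ m + k < d + ℓ') by omega) with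
        ⟨h5, h6⟩ | ⟨h5, h6⟩
      · left
        refine ⟨m + k, h5, h6, ?_⟩
        rw [epow_add hq]
      · right
        refine ⟨m + k - d, by omega, by omega, ?_⟩
        rw [epow_add hq, epow_add hq]
        congr 2
        ring

lemma nested (hq : q ≠ 0) {ℓ ℓ' : ℕ} {a a' : ℂ}
    (ha : a ≠ 0) (hℓ : 1 ≤ ℓ) {d : ℤ}
    (hbot : a' * q ^ (1 - (ℓ':ℤ)) = a * q ^ (1 - (ℓ:ℤ)) * q ^ (2*d))
    (hd1 : -(ℓ':ℤ) ≤ d) (hd2 : d ≤ (ℓ:ℤ))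
    (hgp : ¬ Adjacent q ℓ a ℓ' a') :
    (0 ≤ d ∧ d + ℓ' ≤ (ℓ:ℤ)) ∨ (d ≤ 0 ∧ (ℓ:ℤ) ≤ d + ℓ') := by
  by_contra hcon
  push_neg at hcon
  apply hgp
  apply adjacent_mk hq ha hℓ hbot hd2 (by omega)
  rcases le_total (0:ℤ) d with h | h <;> rcases le_total ((ℓ:ℤ)) (d + ℓ') with h' | h' <;>
    rcases le_total ((ℓ:ℤ)) ((ℓ':ℤ)) with h'' | h'' <;>
    simp only [max_def, min_def] <;> split_ifs <;> omega

lemma mem_of_max (hq : q ≠ 0) (hqru : NotRootOfUnity q) {Ω : Multiset ℂ}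
    {L' : Multiset (ℕ × ℂ)}
    (hval' : ∀ p ∈ L', 1 ≤ p.1 ∧ p.2 ≠ 0) (hpair' : L'.Pairwise (GenPos q))
    (hsum' : Ω = (L'.map (qStringM q)).sum)
    {ℓ : ℕ} {a : ℂ} (hℓ : 1 ≤ ℓ) (ha : a ≠ 0)
    (hS : qStringM q (ℓ, a) ≤ Ω) (hmax : ∀ p' ∈ L', p'.1 ≤ ℓ) : (ℓ, a) ∈ L' := by
  set b := a * q ^ (1 - (ℓ:ℤ)) with hb
  have hbne : b ≠ 0 := mul_ne_zero ha (zpow_ne_zero _ hq)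
  have hpt : ∀ k : ℤ, 0 ≤ k → k < (ℓ:ℤ) → b * q ^ (2*k) ∈ Ω := by
    intro k h0 hk
    apply Multiset.mem_of_le hS
    rw [mem_qStringM_int hq]
    exact ⟨k, h0, hk, rfl⟩
  have main : ∀ k : ℕ, 1 ≤ k → k ≤ ℓ →
      ∃ p' ∈ L', ∃ d : ℤ, p'.2 * q ^ (1 - (p'.1:ℤ)) = b * q ^ (2*d) ∧ d ≤ 0 ∧
        (k:ℤ) ≤ d + p'.1 := by
    intro k
    induction k with
    | zero => omega
    | succ k ih =>
      intro _ hkℓ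
      rcases Nat.eq_zero_or_pos k with rfl | hk1
      · -- base case : cover the bottom point b
        have hbΩ : b * q ^ (2*(0:ℤ)) ∈ Ω := hpt 0 le_rfl (by exact_mod_cast hℓ)
        rw [hsum'] at hbΩ
        obtain ⟨p', hp', hmem⟩ := mem_sum hbΩ
        rw [mem_qStringM_int hq] at hmem
        obtain ⟨j, hj0, hjl, hx⟩ := hmem
        have hxx : b = (p'.2 * q ^ (1 - (p'.1:ℤ))) * q ^ (2*j) := by
          have : b * q ^ (2*(0:ℤ)) = b := by norm_num
          rwa [this] at hx
        have hbot' := bot_shift hq hxx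
        refine ⟨p', hp', -j, hbot', by omega, by omega⟩
      · obtain ⟨p', hp', d, hbot', hd0, hdk⟩ := ih hk1 (by omega)
        by_cases hdone : ((k:ℤ) + 1) ≤ d + p'.1
        · exact ⟨p', hp', d, hbot', hd0, by push_cast; omega⟩
        · have hdk' : d + (p'.1:ℤ) = k := by omega
          have hxΩ : b * q ^ (2*(k:ℤ)) ∈ Ω := hpt k (by omega) (by exact_mod_cast hkℓ)
          rw [hsum'] at hxΩ
          obtain ⟨p'', hp'', hmem⟩ := mem_sum hxΩ
          rw [mem_qStringM_int hq] at hmem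
          obtain ⟨m, hm0, hml, hx⟩ := hmem
          have hbot'' : p''.2 * q ^ (1 - (p''.1:ℤ)) = b * q ^ (2*((k:ℤ) - m)) := by
            have h1 := bot_shift hq hx
            rw [epow_add hq] at h1
            have h2 : (k:ℤ) + -m = k - m := by ring
            rw [h1, h2]
          have hval1 := hval' p' hp'
          have hval2 := hval' p'' hp''
          by_cases hpp : p' = p''
          · exfalso
            rw [← hpp] at hbot'' hml
            have hde : d = (k:ℤ) - m := epow_inj hq hqru hbne (hbot'.symm.trans hbot'')
            omega
          · have hgp : GenPos q p' p'' := pairwise_forall genpos_symm hpair' hp' hp'' hpp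
            have hrel : p''.2 * q ^ (1 - (p''.1:ℤ)) =
                p'.2 * q ^ (1 - (p'.1:ℤ)) * q ^ (2*(((k:ℤ) - m) - d)) := by
              rw [hbot', hbot'', epow_add hq]
              congr 2
              ring
            have hnest := nested hq hval1.2 hval1.1 hrel (by omega) (by omega) hgp
            rcases hnest with ⟨h5, h6⟩ | ⟨h5, h6⟩
            · omega
            · exact ⟨p'', hp'', (k:ℤ) - m, hbot'', by omega, by push_cast; omega⟩
  obtain ⟨p', hp', d, hbot', hd0, hdl⟩ := main ℓ hℓ le_rfl
  have hℓ'le : p'.1 ≤ ℓ := hmax p' hp'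
  have hd : d = 0 ∧ (p'.1:ℤ) = ℓ := ⟨by omega, by omega⟩
  obtain ⟨rfl, hℓeq⟩ := hd
  have hℓeq' : p'.1 = ℓ := by exact_mod_cast hℓeq
  rw [hℓeq'] at hbot'
  have hbot'' : p'.2 * q ^ (1 - (ℓ:ℤ)) = a * q ^ (1 - (ℓ:ℤ)) := by
    rw [hbot', hb]
    norm_num
  have ha' : p'.2 = a := mul_right_cancel₀ (zpow_ne_zero _ hq) hbot''
  have : p' = (ℓ, a) := Prod.ext hℓeq' ha'
  rwa [this] at hp'

lemma exists_max (s : Multiset (ℕ × ℂ)) (hs : s ≠ 0) :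
    ∃ p ∈ s, ∀ p' ∈ s, p'.1 ≤ p.1 := by
  induction s using Multiset.induction with
  | empty => exact absurd rfl hs
  | @cons r s ih =>
    rcases eq_or_ne s 0 with rfl | hne
    · refine ⟨r, Multiset.mem_cons_self _ _, ?_⟩
      intro p' hp'
      rcases Multiset.mem_cons.mp hp' with rfl | hp'
      · exact le_rfl
      · simp at hp'
    · obtain ⟨p, hp, hmaxp⟩ := ih hne
      rcases le_total p.1 r.1 with h | h
      · refine ⟨r, Multiset.mem_cons_self _ _, ?_⟩
        intro p' hp'
        rcases Multiset.mem_cons.mp hp' with rfl | hp'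
        · exact le_rfl
        · exact le_trans (hmaxp p' hp') h
      · refine ⟨p, Multiset.mem_cons_of_mem hp, ?_⟩
        intro p' hp'
        rcases Multiset.mem_cons.mp hp' with rfl | hp'
        · exact h
        · exact hmaxp p' hp'

lemma eq_zero_of_decomp {L : Multiset (ℕ × ℂ)} (hval : ∀ p ∈ L, 1 ≤ p.1 ∧ p.2 ≠ 0)
    (hsum : (L.map (qStringM q)).sum = 0) : L = 0 := by
  rw [Multiset.eq_zero_iff_forall_notMem]
  intro p hp
  have h1 : qStringM q p ≤ 0 := hsum ▸ le_sum hp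
  have h2 : qStringM q p = 0 := Multiset.le_zero.mp h1
  have h3 := card_qStringM (q := q) p
  rw [h2] at h3
  have := (hval p hp).1
  simp at h3
  omega

lemma unique_decomp (hq : q ≠ 0) (hqru : NotRootOfUnity q) :
    ∀ n (Ω : Multiset ℂ), Multiset.card Ω ≤ n →
    ∀ L L' : Multiset (ℕ × ℂ),
      ((∀ p ∈ L, 1 ≤ p.1 ∧ p.2 ≠ 0) ∧ L.Pairwise (GenPos q) ∧ Ω = (L.map (qStringM q)).sum) →
      ((∀ p ∈ L', 1 ≤ p.1 ∧ p.2 ≠ 0) ∧ L'.Pairwise (GenPos q) ∧ Ω = (L'.map (qStringM q)).sum) →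
      L = L' := by
  intro n
  induction n with
  | zero =>
    intro Ω hc L L' ⟨hv, hp, hs⟩ ⟨hv', hp', hs'⟩
    have hΩ0 : Ω = 0 := Multiset.card_eq_zero.mp (le_antisymm hc (Nat.zero_le _))
    rw [eq_zero_of_decomp hv (hΩ0 ▸ hs).symm, eq_zero_of_decomp hv' (hΩ0 ▸ hs').symm]
  | succ n ih =>
    intro Ω hc L L' ⟨hv, hp, hs⟩ ⟨hv', hp', hs'⟩
    rcases eq_or_ne Ω 0 with rfl | hne
    · rw [eq_zero_of_decomp hv hs.symm, eq_zero_of_decomp hv' hs'.symm]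
    · have hLne : L + L' ≠ 0 := by
        intro h
        have hcard0 := congrArg Multiset.card h
        rw [Multiset.card_add] at hcard0
        simp only [Multiset.card_zero, Nat.add_eq_zero] at hcard0
        rw [Multiset.card_eq_zero.mp hcard0.1] at hs
        simp at hs
        exact hne hs
      obtain ⟨p, hpm, hmaxp⟩ := exists_max (L + L') hLne
      have hSle : qStringM q p ≤ Ω := by
        rcases Multiset.mem_add.mp hpm with h | h
        · exact hs ▸ le_sum h
        · exact hs' ▸ le_sum h
      have hpv : 1 ≤ p.1 ∧ p.2 ≠ 0 := by
        rcases Multiset.mem_add.mp hpm with h | h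
        · exact hv p h
        · exact hv' p h
      have hmaxL : ∀ p' ∈ L, p'.1 ≤ p.1 := fun p' h => hmaxp p' (Multiset.mem_add.mpr (Or.inl h))
      have hmaxL' : ∀ p' ∈ L', p'.1 ≤ p.1 := fun p' h => hmaxp p' (Multiset.mem_add.mpr (Or.inr h))
      have hpL : (p.1, p.2) ∈ L := mem_of_max hq hqru hv hp hs hpv.1 hpv.2 hSle hmaxL
      have hpL' : (p.1, p.2) ∈ L' := mem_of_max hq hqru hv' hp' hs' hpv.1 hpv.2 hSle hmaxL'
      rw [show (p.1, p.2) = p from rfl] at hpL hpL'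
      have hcard : Multiset.card (Ω - qStringM q p) ≤ n := by
        have h1 := Multiset.card_sub hSle
        have h2 := Multiset.card_le_card hSle
        have h3 := card_qStringM (q := q) p
        omega
      have herase : ∀ (M : Multiset (ℕ × ℂ)), p ∈ M → Ω = (M.map (qStringM q)).sum →
          Ω - qStringM q p = ((M.erase p).map (qStringM q)).sum := by
        intro M hpM hsM
        have h1 : M = p ::ₘ M.erase p := (Multiset.cons_erase hpM).symm
        rw [h1, Multiset.map_cons, Multiset.sum_cons] at hsM
        rw [hsM]
        exact (add_tsub_cancel_left _ _)
      have hrec := ih (Ω - qStringM q p) hcard (L.erase p) (L'.erase p)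
        ⟨fun p' h => hv p' (Multiset.mem_of_mem_erase h),
          pairwise_mono genpos_symm (Multiset.erase_le _ _) hp,
          herase L hpL hs⟩
        ⟨fun p' h => hv' p' (Multiset.mem_of_mem_erase h),
          pairwise_mono genpos_symm (Multiset.erase_le _ _) hp',
          herase L' hpL' hs'⟩
      calc L = p ::ₘ L.erase p := (Multiset.cons_erase hpL).symm
        _ = p ::ₘ L'.erase p := by rw [hrec]
        _ = L' := Multiset.cons_erase hpL'

lemma exists_decomp (hq : q ≠ 0) (hqru : NotRootOfUnity q) :
    ∀ n (Ω : Multiset ℂ), (0:ℂ) ∉ Ω → Multiset.card Ω ≤ n →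
    ∃ L : Multiset (ℕ × ℂ),
      (∀ p ∈ L, 1 ≤ p.1 ∧ p.2 ≠ 0) ∧ L.Pairwise (GenPos q) ∧ Ω = (L.map (qStringM q)).sum := by
  intro n
  induction n with
  | zero =>
    intro Ω hΩ hc
    have hΩ0 : Ω = 0 := Multiset.card_eq_zero.mp (le_antisymm hc (Nat.zero_le _))
    exact ⟨0, by simp, pairwise_zero, by simp [hΩ0]⟩
  | succ n ih =>
    intro Ω hΩ hc
    rcases eq_or_ne Ω 0 with rfl | hne
    · exact ⟨0, by simp, pairwise_zero, by simp⟩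
    · classical
      set good : ℕ → Prop := fun m => ∃ a : ℂ, a ≠ 0 ∧ qStringM q (m, a) ≤ Ω with hgood
      obtain ⟨x, hx⟩ := Multiset.exists_mem_of_ne_zero hne
      have hx0 : x ≠ 0 := fun h => hΩ (h ▸ hx)
      have hgood1 : good 1 := ⟨x, hx0, by rw [qStringM_one]; exact Multiset.singleton_le.mpr hx⟩
      have hbound : ∀ m, good m → m ≤ Multiset.card Ω := by
        rintro m ⟨a, ha, hle⟩
        have h1 := Multiset.card_le_card hle
        rw [card_qStringM] at h1
        exact h1
      set ℓ := Nat.findGreatest good (Multiset.card Ω) with hℓdef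
      have hℓ1 : 1 ≤ ℓ := Nat.le_findGreatest (hbound 1 hgood1) hgood1
      have hgoodℓ : good ℓ := Nat.findGreatest_spec (hbound 1 hgood1) hgood1
      obtain ⟨a, ha, hSle⟩ := hgoodℓ
      set S := qStringM q (ℓ, a) with hSdef
      have hScard : Multiset.card S = ℓ := card_qStringM _
      have hcard' : Multiset.card (Ω - S) ≤ n := by
        have h1 := Multiset.card_sub hSle
        have h2 := Multiset.card_le_card hSle
        omega
      have hΩ' : (0:ℂ) ∉ Ω - S := fun h =>
        hΩ (Multiset.mem_of_le (Multiset.sub_le_self _ _) h)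
      obtain ⟨L', hval', hpair', hsum'⟩ := ih (Ω - S) hΩ' hcard'
      refine ⟨(ℓ, a) ::ₘ L', ?_, ?_, ?_⟩
      · rintro p hp
        rcases Multiset.mem_cons.mp hp with rfl | hp
        · exact ⟨hℓ1, ha⟩
        · exact hval' p hp
      · refine pairwise_cons ?_ hpair'
        intro p' hp' hadj
        obtain ⟨ℓ'', a'', ha'', hgt, hu⟩ := hadj
        have hS'le : qStringM q p' ≤ Ω - S := hsum' ▸ le_sum hp'
        have hS''le : qStringM q (ℓ'', a'') ≤ Ω := by
          rw [Multiset.le_iff_count]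
          intro y
          by_cases hy : y ∈ qStringM q (ℓ'', a'')
          · have h1 : Multiset.count y (qStringM q (ℓ'', a'')) ≤ 1 :=
              Multiset.nodup_iff_count_le_one.mp (nodup_qStringM hq hqru ha'') y
            have hy' : y ∈ qString q a'' ℓ'' := mem_qStringM_iff.mp hy
            rw [← hu, Finset.mem_union] at hy'
            have hyΩ : y ∈ Ω := by
              rcases hy' with h | h
              · exact Multiset.mem_of_le hSle (mem_qStringM_iff.mpr h)
              · exact Multiset.mem_of_le (le_trans hS'le (Multiset.sub_le_self _ _))
                  (mem_qStringM_iff.mpr h)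
            have h2 : 1 ≤ Multiset.count y Ω := Multiset.one_le_count_iff_mem.mpr hyΩ
            omega
          · rw [Multiset.count_eq_zero_of_notMem hy]
            exact Nat.zero_le _
        have hb'' : ℓ'' ≤ Multiset.card Ω := hbound ℓ'' ⟨a'', ha'', hS''le⟩
        have hgtℓ : ℓ < ℓ'' := lt_of_le_of_lt (le_max_left _ _) hgt
        exact Nat.findGreatest_is_greatest hgtℓ hb'' ⟨a'', ha'', hS''le⟩
      · rw [Multiset.map_cons, Multiset.sum_cons, ← hsum', ← hSdef, add_comm]
        exact (tsub_add_cancel_of_le hSle).symm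

end QSD

/-- every finite multiset of nonzero complex numbers decomposes uniquely
as a union of a multiset of `q`-strings in general position. -/
theorem exists_unique_qString_decomposition (q : ℂ) (hq : q ≠ 0) (hqru : NotRootOfUnity q)
    (Ω : Multiset ℂ) (hΩ : (0 : ℂ) ∉ Ω) :
    ∃! L : Multiset (ℕ × ℂ),
      (∀ p ∈ L, 1 ≤ p.1 ∧ p.2 ≠ 0) ∧
      L.Pairwise (GenPos q) ∧
      Ω = (L.map (qStringM q)).sum := by
  obtain ⟨L, hL⟩ := QSD.exists_decomp hq hqru (Multiset.card Ω) Ω hΩ le_rfl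
  refine ⟨L, hL, ?_⟩
  intro L' hL'
  exact QSD.unique_decomp hq hqru (Multiset.card Ω) Ω le_rfl L' L hL' hL
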